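/- For every j ≥ 3, s ≥ 3, and indices j_1 < j_2 < ⋯ < j_s with s ≤ j_1 and j_1 ≥ 3, if (F_{j_k})_{k=1}^s are successive finite subsets of ℕ with #F_{j_k} = p_{j_k}, then the functional Σ_{k=1}^s (1/m_{j_k}) Σ_{i∈F_{j_k}} e_i* belongs to the norming set K_0. -/

import Mathlib

/-- `f < g` for finitely supported vectors. -/
def Succ (f g : ℕ →₀ ℝ) : Prop := ∀ a ∈ f.support, ∀ b ∈ g.support, a < b

/-- The norming set `K₀` of the mixed Tsirelson space
`T₀ = T[(A_{n_j}, 1/m_j)_j]`: the minimal subset of `c₀₀(ℕ)` containing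
`{±e_i*}` and closed, for each `j`, under the operation assigning to successive
`f_1 < ⋯ < f_d` in `K₀` with `d ≤ n j` the functional `(1/m j)(f_1 + ⋯ + f_d)`. -/
inductive K0 (m n : ℕ → ℕ) : (ℕ →₀ ℝ) → Prop
  | pos (r : ℕ) : K0 m n (Finsupp.single r 1)
  | neg (r : ℕ) : K0 m n (-Finsupp.single r 1)
  | op (j d : ℕ) (hd : d ≤ n j) (f : Fin d → ℕ →₀ ℝ)
      (hmem : ∀ t, K0 m n (f t))
      (hsucc : ∀ t t' : Fin d, t < t' → Succ (f t) (f t')) :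
      K0 m n (((m j : ℝ))⁻¹ • ∑ t, f t)

/-- With the parameters of the paper, for every `s ≥ 3` and indices
`j_1 < j_2 < ⋯ < j_s` with `s ≤ j_1` and `j_1 ≥ 3`, if `(F (j k))` are
successive finite subsets of `ℕ` with `#(F k) = p (j k)`, then the functional
`Σ_{k=1}^s (1/m (j k)) Σ_{i ∈ F k} e_i*` belongs to `K₀`. -/

lemma chunk_lt {Q D N : ℕ} (hN : N = Q * D) (u : Fin Q) (c : Fin D) :
    (u : ℕ) + Q * c < N := by
  have h1 : (u : ℕ) + Q * c < Q * (c + 1) := by nlinarith [u.isLt]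
  have h2 : Q * ((c : ℕ) + 1) ≤ Q * D := Nat.mul_le_mul_left _ c.isLt
  omega

lemma chunk_mono {Q D : ℕ} (u u' : Fin Q) (c c' : Fin D)
    (h : (c : ℕ) < c' ∨ ((c : ℕ) = c' ∧ (u : ℕ) < u')) :
    (u : ℕ) + Q * c < (u' : ℕ) + Q * c' := by
  rcases h with h | ⟨h1, h2⟩
  · have : Q * ((c : ℕ) + 1) ≤ Q * c' := Nat.mul_le_mul_left _ h
    have := u.isLt
    nlinarith
  · rw [h1]; omega

lemma sum_chunks {M : Type*} [AddCommMonoid M] {Q D N : ℕ} (hN : N = Q * D) (f : Fin N → M) :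
    ∑ v, f v = ∑ c : Fin D, ∑ u : Fin Q, f ⟨(u : ℕ) + Q * c, chunk_lt hN u c⟩ := by
  subst hN
  rw [← Equiv.sum_comp ((finProdFinEquiv (m := D) (n := Q)).trans (finCongr (Nat.mul_comm D Q))) f]
  rw [Fintype.sum_prod_type]
  rfl

lemma supp_subset (w : ℝ) {N : ℕ} (g : Fin N → ℕ) :
    (w • ∑ t, Finsupp.single (g t) (1 : ℝ)).support ⊆ Finset.image g Finset.univ := by
  intro a ha
  have h1 : a ∈ (∑ t, Finsupp.single (g t) (1 : ℝ)).support := Finsupp.support_smul ha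
  obtain ⟨c, -, hc⟩ := Finsupp.mem_support_finset_sum a h1
  have := Finsupp.support_single_subset hc
  simp only [Finset.mem_singleton] at this
  subst this
  exact Finset.mem_image_of_mem g (Finset.mem_univ c)

lemma succ_smul_sum {N N' : ℕ} (w w' : ℝ) (g : Fin N → ℕ) (g' : Fin N' → ℕ)
    (h : ∀ t t', g t < g' t') :
    Succ (w • ∑ t, Finsupp.single (g t) (1 : ℝ)) (w' • ∑ t, Finsupp.single (g' t) (1 : ℝ)) := by
  intro a ha b hb
  obtain ⟨t, -, rfl⟩ := Finset.mem_image.mp (supp_subset w g ha)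
  obtain ⟨t', -, rfl⟩ := Finset.mem_image.mp (supp_subset w' g' hb)
  exact h t t'

lemma sum_enum {M : Type*} [AddCommMonoid M] (F : Finset ℕ) (φ : ℕ → M) :
    ∑ i ∈ F, φ i = ∑ t : Fin F.card, φ (F.orderEmbOfFin rfl t) := by
  have himg : Finset.image (fun t => F.orderEmbOfFin rfl t) Finset.univ = F := by
    ext a
    simp only [Finset.mem_image, Finset.mem_univ, true_and]
    constructor
    · rintro ⟨t, rfl⟩; exact Finset.orderEmbOfFin_mem F rfl t
    · intro haF
      have : a ∈ Set.range (F.orderEmbOfFin rfl) := by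
        rw [Finset.range_orderEmbOfFin]; exact haF
      obtain ⟨t, ht⟩ := this
      exact ⟨t, ht⟩
  calc ∑ i ∈ F, φ i = ∑ i ∈ Finset.image (fun t => F.orderEmbOfFin rfl t) Finset.univ, φ i := by
        rw [himg]
    _ = ∑ t : Fin F.card, φ (F.orderEmbOfFin rfl t) :=
        Finset.sum_image (fun x _ y _ hxy => (F.orderEmbOfFin rfl).injective hxy)

lemma tree (m n : ℕ → ℕ) (a : ℕ) : ∀ b, a ≤ b → ∀ N, N = ∏ r ∈ Finset.Ico a b, n r →
    ∀ g : Fin N → ℕ, StrictMono g →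
    K0 m n (((∏ r ∈ Finset.Ico a b, m r : ℕ) : ℝ)⁻¹ • ∑ t, Finsupp.single (g t) (1 : ℝ)) := by
  intro b hab
  induction b, hab using Nat.le_induction with
  | base =>
    intro N hN g _
    rw [Finset.Ico_self, Finset.prod_empty] at hN ⊢
    subst hN
    rw [Nat.cast_one, inv_one, one_smul, Fin.sum_univ_one]
    exact K0.pos (g 0)
  | succ b hab ih =>
    intro N hN g hg
    have hQD : N = (∏ r ∈ Finset.Ico a b, n r) * n b := by
      rw [hN, Finset.prod_Ico_succ_top hab]
    set Q := ∏ r ∈ Finset.Ico a b, n r with hQ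
    set f : Fin (n b) → (ℕ →₀ ℝ) := fun c =>
      ((∏ r ∈ Finset.Ico a b, m r : ℕ) : ℝ)⁻¹ •
        ∑ u : Fin Q, Finsupp.single (g ⟨(u : ℕ) + Q * c, chunk_lt hQD u c⟩) (1 : ℝ) with hf
    have hmem : ∀ c, K0 m n (f c) := by
      intro c
      refine ih Q rfl _ (fun u u' huu => hg ?_)
      rw [Fin.lt_def]
      exact chunk_mono u u' c c (Or.inr ⟨rfl, huu⟩)
    have hsucc : ∀ c c' : Fin (n b), c < c' → Succ (f c) (f c') := by
      intro c c' hcc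
      exact succ_smul_sum _ _ _ _ fun u u' => hg (chunk_mono u u' c c' (Or.inl hcc))
    have hop := K0.op b (n b) le_rfl f hmem hsucc
    have heq : ((∏ r ∈ Finset.Ico a (b + 1), m r : ℕ) : ℝ)⁻¹ •
        ∑ t : Fin N, Finsupp.single (g t) (1 : ℝ) = ((m b : ℝ))⁻¹ • ∑ c, f c := by
      rw [Finset.prod_Ico_succ_top hab, Nat.cast_mul, sum_chunks hQD, mul_inv,
        mul_comm, mul_smul]
      congr 1
      rw [Finset.smul_sum]
    rw [heq]
    exact hop

lemma chunk_mono_inv {Q D : ℕ} (u u' : Fin Q) (c c' : Fin D)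
    (h : (u : ℕ) + Q * c < (u' : ℕ) + Q * c') :
    (c : ℕ) < c' ∨ ((c : ℕ) = c' ∧ (u : ℕ) < u') := by
  rcases lt_trichotomy (c : ℕ) (c' : ℕ) with hc | hc | hc
  · exact Or.inl hc
  · right; refine ⟨hc, ?_⟩; rw [hc] at h; omega
  · exact absurd (chunk_mono u' u c' c (Or.inl hc)) (by omega)

lemma assemble (m n : ℕ → ℕ) (s p' q : ℕ) (W w N Nk : Fin s → ℕ)
    (hd : s * p' ≤ n q)
    (hN : ∀ k, N k = Nk k * p')
    (g : ∀ k : Fin s, Fin (N k) → ℕ) (hg : ∀ k, StrictMono (g k))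
    (hcross : ∀ k k' : Fin s, k < k' → ∀ u u', g k u < g k' u')
    (hmem : ∀ (k : Fin s) (c : Fin p'),
      K0 m n (((W k : ℕ) : ℝ)⁻¹ • ∑ u : Fin (Nk k),
        Finsupp.single (g k ⟨(u : ℕ) + Nk k * c, chunk_lt (hN k) u c⟩) (1 : ℝ)))
    (hw : ∀ k, (m q) * W k = w k) :
    K0 m n (∑ k : Fin s, ((w k : ℝ))⁻¹ • ∑ v, Finsupp.single (g k v) (1 : ℝ)) := by
  set chi : ∀ _ : Fin s, Fin p' → (ℕ →₀ ℝ) := fun k c =>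
    ((W k : ℕ) : ℝ)⁻¹ • ∑ u : Fin (Nk k),
      Finsupp.single (g k ⟨(u : ℕ) + Nk k * c, chunk_lt (hN k) u c⟩) (1 : ℝ) with hchi
  set fOut : Fin (s * p') → (ℕ →₀ ℝ) := fun t =>
    chi (finProdFinEquiv.symm t).1 (finProdFinEquiv.symm t).2 with hfOut
  have hval : ∀ t : Fin (s * p'),
      (t : ℕ) = ((finProdFinEquiv.symm t).2 : ℕ) + p' * ((finProdFinEquiv.symm t).1 : ℕ) := by
    intro t
    conv_lhs => rw [← Equiv.apply_symm_apply (finProdFinEquiv (m := s) (n := p')) t]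
    rfl
  have hmem' : ∀ t, K0 m n (fOut t) := fun t => hmem _ _
  have hsucc' : ∀ t t' : Fin (s * p'), t < t' → Succ (fOut t) (fOut t') := by
    intro t t' htt
    have hlt : ((finProdFinEquiv.symm t).2 : ℕ) + p' * ((finProdFinEquiv.symm t).1 : ℕ)
        < ((finProdFinEquiv.symm t').2 : ℕ) + p' * ((finProdFinEquiv.symm t').1 : ℕ) := by
      rw [← hval t, ← hval t']; exact htt
    show Succ (chi (finProdFinEquiv.symm t).1 (finProdFinEquiv.symm t).2)
      (chi (finProdFinEquiv.symm t').1 (finProdFinEquiv.symm t').2)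
    rcases chunk_mono_inv _ _ _ _ hlt with hk | ⟨hk, hc⟩
    · rw [hchi]
      exact succ_smul_sum _ _ _ _ fun u u' => hcross _ _ hk _ _
    · have hk' : (finProdFinEquiv.symm t).1 = (finProdFinEquiv.symm t').1 := Fin.ext hk
      rw [← hk']
      rw [hchi]
      refine succ_smul_sum _ _ _ _ fun u u' => hg _ ?_
      exact Fin.mk_lt_mk.mpr (chunk_mono u u' _ _ (Or.inl hc))
  have hop := K0.op q (s * p') hd fOut hmem' hsucc'
  have key : (∑ k : Fin s, ((w k : ℝ))⁻¹ • ∑ v, Finsupp.single (g k v) (1 : ℝ))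
      = ((m q : ℝ))⁻¹ • ∑ t, fOut t := by
    rw [← Equiv.sum_comp (finProdFinEquiv (m := s) (n := p')) fOut, Fintype.sum_prod_type]
    have hfe : ∀ (k : Fin s) (c : Fin p'), fOut (finProdFinEquiv (k, c)) = chi k c := by
      intro k c
      rw [hfOut]
      simp only [Equiv.symm_apply_apply]
    rw [Finset.sum_congr rfl fun k _ => Finset.sum_congr rfl fun c _ => hfe k c]
    rw [Finset.smul_sum]
    refine Finset.sum_congr rfl fun k _ => ?_
    have h1 : ∑ c : Fin p', chi k c
        = ((W k : ℕ) : ℝ)⁻¹ • ∑ v, Finsupp.single (g k v) (1 : ℝ) := by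
      rw [hchi]
      rw [← Finset.smul_sum]
      congr 1
      exact (sum_chunks (hN k) fun v => Finsupp.single (g k v) (1 : ℝ)).symm
    rw [h1, smul_smul]
    congr 1
    rw [← mul_inv, ← Nat.cast_mul, hw k]
  rw [key]
  exact hop

lemma m_ge (m : ℕ → ℕ) (hm1 : m 1 = 2) (hm2 : m 2 = 2)
    (hmrec : ∀ j, 3 ≤ j → m j = (m (j - 1)) ^ 2) : ∀ i, 1 ≤ i → 2 ≤ m i := by
  intro i
  induction i using Nat.strong_induction_on with
  | _ i ih =>
    intro hi
    rcases Nat.lt_or_ge i 3 with h3 | h3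
    · interval_cases i <;> omega
    · rw [hmrec i h3]
      have h2 := ih (i - 1) (by omega) (by omega)
      nlinarith

lemma mprod (m : ℕ → ℕ) (hmrec : ∀ j, 3 ≤ j → m j = (m (j - 1)) ^ 2)
    (q : ℕ) (hq : 2 ≤ q) : ∀ b, q + 1 ≤ b → m q * ∏ r ∈ Finset.Ico q b, m r = m b := by
  intro b hb
  induction b, hb using Nat.le_induction with
  | base =>
    rw [Finset.prod_Ico_succ_top (le_refl q), Finset.Ico_self, Finset.prod_empty, one_mul]
    rw [hmrec (q + 1) (by omega)]
    simp only [Nat.add_sub_cancel]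
    ring
  | succ b hb ih =>
    rw [Finset.prod_Ico_succ_top (by omega : q ≤ b), ← mul_assoc, ih]
    rw [hmrec (b + 1) (by omega)]
    simp only [Nat.add_sub_cancel]
    ring

theorem stmt8 (m n : ℕ → ℕ) (hm1 : m 1 = 2) (hm2 : m 2 = 2)
    (hmrec : ∀ j, 3 ≤ j → m j = (m (j - 1)) ^ 2)
    (hn1 : 2 ^ 3 * m 3 ≤ n 1)
    (hnrec : ∀ j, 2 ≤ j → (4 * n (j - 1)) ^ 5 * m j ≤ n j)
    (p : ℕ → ℕ) (hp : ∀ j, p j = ∏ i ∈ Finset.Icc 1 (j - 1), n i)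
    (s : ℕ) (hs : 3 ≤ s) (j : Fin s → ℕ) (hjmono : StrictMono j)
    (hj1 : s ≤ j ⟨0, by omega⟩) (hj3 : 3 ≤ j ⟨0, by omega⟩)
    (F : Fin s → Finset ℕ) (hcard : ∀ k, (F k).card = p (j k))
    (hFsucc : ∀ k k' : Fin s, k < k' → ∀ a ∈ F k, ∀ b ∈ F k', a < b) :
    K0 m n (∑ k : Fin s, ((m (j k) : ℝ))⁻¹ • ∑ i ∈ F k, Finsupp.single i (1 : ℝ)) := by
  have hs0 : 0 < s := by omega
  set q := j ⟨0, hs0⟩ - 1 with hqdef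
  have hj30 : 3 ≤ j ⟨0, hs0⟩ := hj3
  have hj10 : s ≤ j ⟨0, hs0⟩ := hj1
  have hq2 : 2 ≤ q := by omega
  have hqk : ∀ k : Fin s, q + 1 ≤ j k := by
    intro k
    have h0 : j ⟨0, hs0⟩ ≤ j k := hjmono.monotone (by simp [Fin.le_def])
    omega
  have hmge : ∀ i, 1 ≤ i → 2 ≤ m i := m_ge m hm1 hm2 hmrec
  have hm3 : m 3 = 4 := by
    rw [hmrec 3 (by norm_num)]
    norm_num [hm2]
  have hn1' : 32 ≤ n 1 := by rw [hm3] at hn1; omega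
  have hstep : ∀ i, 1 ≤ i → 2 * n i ^ 2 ≤ n (i + 1) := by
    intro i hi
    have h := hnrec (i + 1) (by omega)
    simp only [Nat.add_sub_cancel] at h
    have hm : 2 ≤ m (i + 1) := hmge (i + 1) (by omega)
    rcases Nat.eq_zero_or_pos (n i) with h0 | h0
    · simp [h0]
    · have h3 : 0 < (n i) ^ 3 := Nat.pow_pos h0
      have hX : n i ^ 2 ≤ n i ^ 3 * n i ^ 2 := Nat.le_mul_of_pos_left _ h3
      calc 2 * n i ^ 2 ≤ 2 * (n i ^ 3 * n i ^ 2) := Nat.mul_le_mul_left 2 hX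
        _ ≤ 1024 * (n i ^ 3 * n i ^ 2) * m (i + 1) := by nlinarith
        _ = (4 * n i) ^ 5 * m (i + 1) := by ring
        _ ≤ n (i + 1) := h
  have hnge : ∀ i, 1 ≤ i → 32 ≤ n i := by
    intro i hi
    induction i, hi using Nat.le_induction with
    | base => exact hn1'
    | succ i hi ih =>
      have := hstep i hi
      nlinarith
  have hcount : ∀ t, 1 ≤ t → (t + 2) * ∏ r ∈ Finset.Ico 1 (t + 1), n r ≤ n (t + 1) := by
    intro t ht
    induction t, ht using Nat.le_induction with
    | base =>
      rw [show Finset.Ico 1 2 = {1} from rfl, Finset.prod_singleton]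
      have h1 := hstep 1 (le_refl 1)
      nlinarith [hn1']
    | succ t ht ih =>
      rw [Finset.prod_Ico_succ_top (by omega : 1 ≤ t + 1)]
      have h2 := hstep (t + 1) (by omega)
      calc (t + 1 + 2) * ((∏ r ∈ Finset.Ico 1 (t + 1), n r) * n (t + 1))
          ≤ (2 * (t + 2)) * ((∏ r ∈ Finset.Ico 1 (t + 1), n r) * n (t + 1)) := by
            apply Nat.mul_le_mul_right
            omega
        _ = 2 * (((t + 2) * ∏ r ∈ Finset.Ico 1 (t + 1), n r) * n (t + 1)) := by ring
        _ ≤ 2 * (n (t + 1) * n (t + 1)) := by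
            apply Nat.mul_le_mul_left
            exact Nat.mul_le_mul_right _ ih
        _ = 2 * n (t + 1) ^ 2 := by ring
        _ ≤ n (t + 1 + 1) := h2
  have hw : ∀ k : Fin s, m q * ∏ r ∈ Finset.Ico q (j k), m r = m (j k) :=
    fun k => mprod m hmrec q hq2 (j k) (hqk k)
  have hN : ∀ k : Fin s,
      (F k).card = (∏ r ∈ Finset.Ico q (j k), n r) * ∏ r ∈ Finset.Ico 1 q, n r := by
    intro k
    rw [hcard k, hp (j k)]
    have hIcc : Finset.Icc 1 (j k - 1) = Finset.Ico 1 (j k) := by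
      have := hqk k
      ext x
      simp only [Finset.mem_Icc, Finset.mem_Ico]
      omega
    rw [hIcc,
      ← Finset.prod_Ico_consecutive n (by omega : 1 ≤ q) (by have := hqk k; omega : q ≤ j k),
      Nat.mul_comm]
  have hd : s * ∏ r ∈ Finset.Ico 1 q, n r ≤ n q := by
    have h := hcount (q - 1) (by omega)
    have e1 : q - 1 + 1 = q := by omega
    have e2 : q - 1 + 2 = q + 1 := by omega
    rw [e1, e2] at h
    calc s * ∏ r ∈ Finset.Ico 1 q, n r
        ≤ (q + 1) * ∏ r ∈ Finset.Ico 1 q, n r := Nat.mul_le_mul_right _ (by omega)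
      _ ≤ n q := h
  have hgmain : ∀ k : Fin s,
      StrictMono (fun v : Fin ((F k).card) => ((F k).orderEmbOfFin rfl v : ℕ)) :=
    fun k => ((F k).orderEmbOfFin rfl).strictMono
  have hcross : ∀ k k' : Fin s, k < k' → ∀ (u : Fin ((F k).card)) (u' : Fin ((F k').card)),
      ((F k).orderEmbOfFin rfl u : ℕ) < ((F k').orderEmbOfFin rfl u' : ℕ) :=
    fun k k' hkk u u' => hFsucc k k' hkk _ (Finset.orderEmbOfFin_mem _ _ _) _
      (Finset.orderEmbOfFin_mem _ _ _)
  have main := assemble m n s (∏ r ∈ Finset.Ico 1 q, n r) q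
    (fun k => ∏ r ∈ Finset.Ico q (j k), m r) (fun k => m (j k))
    (fun k => (F k).card) (fun k => ∏ r ∈ Finset.Ico q (j k), n r)
    hd hN (fun k v => ((F k).orderEmbOfFin rfl v : ℕ)) hgmain hcross
    (fun k c => tree m n q (j k) (by have := hqk k; omega) _ rfl _
      (fun u u' huu => hgmain k (Fin.mk_lt_mk.mpr
        (chunk_mono u u' c c (Or.inr ⟨rfl, huu⟩)))))
    hw
  have hre : (∑ k : Fin s, ((m (j k) : ℝ))⁻¹ • ∑ i ∈ F k, Finsupp.single i (1 : ℝ))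
      = ∑ k : Fin s, ((m (j k) : ℝ))⁻¹ •
        ∑ v : Fin ((F k).card), Finsupp.single ((F k).orderEmbOfFin rfl v) (1 : ℝ) :=
    Finset.sum_congr rfl fun k _ => by
      rw [sum_enum (F k) (fun i => Finsupp.single i (1 : ℝ))]
  rw [hre]
  exact main
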